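/- Let σ₁ be an irreducible 2-dimensional representation of G over k and let σ₂ be an irreducible representation of G over k. Then there exists a character χ of G with σ₂ ≅ σ₁ ⊗ χ if and only if the tensor product σ₁ ⊗ σ₂ has a 1-dimensional subrepresentation. -/

import Mathlib

/-!
Statement 3: Let `σ₁` be an irreducible 2-dimensional representation of `G` over `k` and let
`σ₂` be an irreducible representation of `G` over `k`.  Then there exists a character `χ` of
`G` with `σ₂ ≅ σ₁ ⊗ χ` if and only if the tensor product `σ₁ ⊗ σ₂` has a 1-dimensional
subrepresentation.
-/

open Module TensorProduct

section aux

variable {k V₁ V₂ : Type} [Field k]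
  [AddCommGroup V₁] [Module k V₁]
  [AddCommGroup V₂] [Module k V₂]

/-- The coordinate determinant bilinear form attached to a basis of a 2-dimensional space. -/
noncomputable def omB (b : Basis (Fin 2) k V₁) : V₁ →ₗ[k] V₁ →ₗ[k] k :=
  LinearMap.mk₂ k (fun u v => b.repr u 0 * b.repr v 1 - b.repr u 1 * b.repr v 0)
    (fun m₁ m₂ n => by simp; ring)
    (fun c m n => by simp; ring)
    (fun m n₁ n₂ => by simp; ring)
    (fun c m n => by simp; ring)

lemma omB_apply (b : Basis (Fin 2) k V₁) (u v : V₁) :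
    omB b u v = b.repr u 0 * b.repr v 1 - b.repr u 1 * b.repr v 0 := rfl

lemma repr_app (b : Basis (Fin 2) k V₁) (f : V₁ →ₗ[k] V₁) (w : V₁) (i : Fin 2) :
    b.repr (f w) i = b.repr w 0 * b.repr (f (b 0)) i + b.repr w 1 * b.repr (f (b 1)) i := by
  conv_lhs => rw [← b.sum_repr w]
  rw [Fin.sum_univ_two]
  simp only [map_add, map_smul, Finsupp.add_apply, Finsupp.smul_apply, smul_eq_mul]

lemma omB_det (b : Basis (Fin 2) k V₁) (f : V₁ →ₗ[k] V₁) (u v : V₁) :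
    omB b (f u) (f v) = LinearMap.det f * omB b u v := by
  rw [← LinearMap.det_toMatrix b, Matrix.det_fin_two]
  simp only [omB_apply]
  rw [repr_app b f u 0, repr_app b f u 1, repr_app b f v 0, repr_app b f v 1]
  simp only [LinearMap.toMatrix_apply]
  ring

lemma omB_flip_inj (b : Basis (Fin 2) k V₁) :
    Function.Injective ((omB b).flip) := by
  intro v w h
  have h0 : ∀ u, omB b u v = omB b u w := fun u => by
    have := congrArg (fun φ => φ u) h
    simpa using this
  apply b.ext_elem
  intro i
  have e0 := h0 (b 0)
  have e1 := h0 (b 1)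
  simp [omB_apply, Basis.repr_self] at e0 e1
  fin_cases i <;> simp_all

variable [FiniteDimensional k V₁]

noncomputable def omEquiv (b : Basis (Fin 2) k V₁) : V₁ ≃ₗ[k] Dual k V₁ :=
  LinearEquiv.ofBijective (omB b).flip
    ⟨omB_flip_inj b,
     (LinearMap.injective_iff_surjective_of_finrank_eq_finrank
        (by rw [Subspace.dual_finrank_eq])).mp (omB_flip_inj b)⟩

noncomputable def TeEquiv (b : Basis (Fin 2) k V₁) :
    V₁ ⊗[k] V₂ ≃ₗ[k] (V₁ →ₗ[k] V₂) :=
  (TensorProduct.congr (omEquiv b) (LinearEquiv.refl k V₂)).trans (dualTensorHomEquiv k V₁ V₂)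

lemma TeEquiv_tmul (b : Basis (Fin 2) k V₁) (v : V₁) (w : V₂) (u : V₁) :
    TeEquiv b (v ⊗ₜ[k] w) u = omB b u v • w := by
  simp [TeEquiv, omEquiv, TensorProduct.congr_tmul]
  rfl

lemma Te_equivariant (b : Basis (Fin 2) k V₁) (f₁ : V₁ ≃ₗ[k] V₁) (f₂ : V₂ →ₗ[k] V₂)
    (x : V₁ ⊗[k] V₂) (u : V₁) :
    TeEquiv b (TensorProduct.map (f₁ : V₁ →ₗ[k] V₁) f₂ x) u
      = LinearMap.det (f₁ : V₁ →ₗ[k] V₁) • f₂ (TeEquiv b x (f₁.symm u)) := by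
  induction x using TensorProduct.induction_on with
  | zero => simp
  | tmul v w =>
      rw [TensorProduct.map_tmul, TeEquiv_tmul, TeEquiv_tmul, map_smul, smul_smul]
      congr 1
      conv_lhs => rw [← f₁.apply_symm_apply u]
      exact omB_det b (f₁ : V₁ →ₗ[k] V₁) (f₁.symm u) v
  | add x y hx hy => simp [map_add, hx, hy, smul_add]

omit [FiniteDimensional k V₁] in
lemma tensor_alt (b : Basis (Fin 2) k V₁) (e : V₁ →ₗ[k] V₂) (u v : V₁) :
    u ⊗ₜ[k] e v - v ⊗ₜ[k] e u
      = omB b u v • ((b 0) ⊗ₜ[k] e (b 1) - (b 1) ⊗ₜ[k] e (b 0)) := by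
  conv_lhs => rw [← b.sum_repr u, ← b.sum_repr v]
  simp only [Fin.sum_univ_two]
  simp only [map_add, map_smul, TensorProduct.add_tmul, TensorProduct.tmul_add,
    ← TensorProduct.smul_tmul', TensorProduct.tmul_smul, omB_apply]
  module

end aux

noncomputable def repEquiv {k G V : Type} [Field k] [Group G] [AddCommGroup V] [Module k V]
    (σ : Representation k G V) (g : G) : V ≃ₗ[k] V :=
  LinearEquiv.ofLinear (σ g) (σ g⁻¹)
    (by rw [← Module.End.mul_eq_comp, ← map_mul, mul_inv_cancel, map_one, Module.End.one_eq_id])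
    (by rw [← Module.End.mul_eq_comp, ← map_mul, inv_mul_cancel, map_one, Module.End.one_eq_id])

theorem stmt_3 {k G V₁ V₂ : Type} [Field k] [IsAlgClosed k] [CharZero k] [Group G]
    [AddCommGroup V₁] [Module k V₁] [FiniteDimensional k V₁]
    [AddCommGroup V₂] [Module k V₂] [FiniteDimensional k V₂]
    (σ₁ : Representation k G V₁) (σ₂ : Representation k G V₂)
    (h1 : finrank k V₁ = 2)
    -- σ₁ and σ₂ are irreducible
    (hirr1 : (⊥ : Submodule k V₁) ≠ ⊤ ∧
      ∀ p : Submodule k V₁, (∀ g : G, ∀ v ∈ p, σ₁ g v ∈ p) → p = ⊥ ∨ p = ⊤)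
    (hirr2 : (⊥ : Submodule k V₂) ≠ ⊤ ∧
      ∀ p : Submodule k V₂, (∀ g : G, ∀ v ∈ p, σ₂ g v ∈ p) → p = ⊥ ∨ p = ⊤) :
    (∃ χ : G →* kˣ, ∃ e : V₁ ≃ₗ[k] V₂,
      ∀ (g : G) (v : V₁), e ((χ g : k) • σ₁ g v) = σ₂ g (e v)) ↔
    (∃ L : Submodule k (V₁ ⊗[k] V₂), finrank k L = 1 ∧
      ∀ g : G, ∀ x ∈ L, TensorProduct.map (σ₁ g) (σ₂ g) x ∈ L) := by
  obtain ⟨-, hmin1⟩ := hirr1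
  obtain ⟨-, hmin2⟩ := hirr2
  have b : Basis (Fin 2) k V₁ := finBasisOfFinrankEq k V₁ h1
  have h00 : omB b (b 0) (b 0) = 0 := by
    simp [omB_apply, Basis.repr_self, Finsupp.single_apply]
  have h01 : omB b (b 0) (b 1) = 1 := by
    simp [omB_apply, Basis.repr_self, Finsupp.single_apply]
  constructor
  · rintro ⟨χ, e, he⟩
    set t : V₁ ⊗[k] V₂ := (b 0) ⊗ₜ[k] (e (b 1)) - (b 1) ⊗ₜ[k] (e (b 0)) with htdef
    have hTt : TeEquiv b t (b 0) = -(e (b 0)) := by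
      rw [htdef, map_sub, LinearMap.sub_apply, TeEquiv_tmul, TeEquiv_tmul, h00, h01,
        zero_smul, one_smul, zero_sub]
    have ht : t ≠ 0 := by
      intro h
      rw [h, map_zero] at hTt
      have : e (b 0) = 0 := by simpa using hTt.symm
      exact b.ne_zero 0 (e.map_eq_zero_iff.mp this)
    refine ⟨Submodule.span k {t}, finrank_span_singleton ht, ?_⟩
    intro g x hx
    rw [Submodule.mem_span_singleton] at hx ⊢
    obtain ⟨c, rfl⟩ := hx
    have key : TensorProduct.map (σ₁ g) (σ₂ g) t
        = ((χ g : k) * omB b (σ₁ g (b 0)) (σ₁ g (b 1))) • t := by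
      rw [htdef, map_sub, TensorProduct.map_tmul, TensorProduct.map_tmul,
        ← he g (b 1), ← he g (b 0), map_smul, map_smul, tmul_smul, tmul_smul, ← smul_sub]
      have halt := tensor_alt b (e : V₁ →ₗ[k] V₂) (σ₁ g (b 0)) (σ₁ g (b 1))
      simp only [LinearEquiv.coe_coe] at halt
      rw [halt, smul_smul]
    exact ⟨c * ((χ g : k) * omB b (σ₁ g (b 0)) (σ₁ g (b 1))),
      by rw [map_smul, key, smul_smul, mul_comm c]⟩
  · rintro ⟨L, hL1, hLinv⟩
    obtain ⟨t₀, ht₀, hspan⟩ := finrank_eq_one_iff'.mp hL1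
    set t : V₁ ⊗[k] V₂ := (t₀ : V₁ ⊗[k] V₂) with htdef
    have ht : t ≠ 0 := by
      simp only [htdef, ne_eq, ZeroMemClass.coe_eq_zero]
      exact ht₀
    have hν : ∀ g : G, ∃ c : k, c • t = TensorProduct.map (σ₁ g) (σ₂ g) t := by
      intro g
      obtain ⟨c, hc⟩ := hspan ⟨_, hLinv g t t₀.2⟩
      exact ⟨c, by simpa using congrArg Subtype.val hc⟩
    choose ν hν using hν
    have htinj := smul_left_injective k (M := V₁ ⊗[k] V₂) ht
    have hone : ν 1 = 1 := by
      apply htinj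
      show ν 1 • t = (1 : k) • t
      rw [hν 1, one_smul, map_one, map_one]
      simp [Module.End.one_eq_id]
    have hmul : ∀ g h : G, ν (g * h) = ν g * ν h := by
      intro g h
      apply htinj
      show ν (g * h) • t = (ν g * ν h) • t
      rw [hν (g * h), map_mul, map_mul]
      have hcomp : TensorProduct.map (σ₁ g * σ₁ h) (σ₂ g * σ₂ h) t
          = TensorProduct.map (σ₁ g) (σ₂ g) (TensorProduct.map (σ₁ h) (σ₂ h) t) := by
        rw [Module.End.mul_eq_comp, Module.End.mul_eq_comp, TensorProduct.map_comp]
        rfl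
      rw [hcomp, ← hν h, map_smul, ← hν g, smul_smul, mul_comm]
    have hνinv : ∀ g : G, ν g * ν g⁻¹ = 1 := by
      intro g
      rw [← hmul, mul_inv_cancel, hone]
    have hνne : ∀ g : G, ν g ≠ 0 := fun g => left_ne_zero_of_mul_eq_one (hνinv g)
    set d : G → k := fun g => LinearMap.det (σ₁ g) with hddef
    have hdmul : ∀ g h : G, d (g * h) = d g * d h := by
      intro g h
      simp only [hddef, map_mul]
    have hdone : d 1 = 1 := by simp only [hddef, map_one]
    have hdne : ∀ g : G, d g ≠ 0 := by
      intro g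
      apply left_ne_zero_of_mul_eq_one (b := d g⁻¹)
      rw [← hdmul, mul_inv_cancel, hdone]
    set χ : G →* kˣ :=
      { toFun := fun g => Units.mk0 (ν g / d g) (div_ne_zero (hνne g) (hdne g))
        map_one' := by ext; simp [hone, hdone]
        map_mul' := fun g h => by
          ext
          simp only [Units.val_mk0, Units.val_mul, hmul, hdmul]
          field_simp } with hχdef
    set f : V₁ →ₗ[k] V₂ := TeEquiv b t with hfdef
    have hkey : ∀ (g : G) (u : V₁), f (σ₁ g u) = ((ν g)⁻¹ * d g) • σ₂ g (f u) := by
      intro g u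
      have h := Te_equivariant b (repEquiv σ₁ g) (σ₂ g) t (σ₁ g u)
      rw [show ((repEquiv σ₁ g : V₁ ≃ₗ[k] V₁) : V₁ →ₗ[k] V₁) = σ₁ g from rfl] at h
      rw [← hν g, map_smul, LinearMap.smul_apply] at h
      rw [show (repEquiv σ₁ g).symm (σ₁ g u) = u from (repEquiv σ₁ g).symm_apply_apply u] at h
      have h2 := congrArg (fun z => (ν g)⁻¹ • z) h
      simpa [smul_smul, inv_mul_cancel₀ (hνne g), hfdef] using h2
    have hf0 : f ≠ 0 := by
      intro h
      exact ht ((TeEquiv b).map_eq_zero_iff.mp (hfdef ▸ h))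
    have hinj : Function.Injective f := by
      rcases hmin1 (LinearMap.ker f) (fun g v hv => by
        rw [LinearMap.mem_ker] at hv ⊢
        rw [hkey g v, hv, map_zero, smul_zero]) with hk | hk
      · exact LinearMap.ker_eq_bot.mp hk
      · exact absurd (LinearMap.ker_eq_top.mp hk) hf0
    have hsurj : Function.Surjective f := by
      rcases hmin2 (LinearMap.range f) (fun g y hy => by
        obtain ⟨u, rfl⟩ := hy
        have hc : ((ν g)⁻¹ * d g) ≠ 0 := mul_ne_zero (inv_ne_zero (hνne g)) (hdne g)
        exact ⟨((ν g)⁻¹ * d g)⁻¹ • σ₁ g u, by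
          rw [map_smul, hkey g u, smul_smul, inv_mul_cancel₀ hc, one_smul]⟩) with hr | hr
      · exact absurd (LinearMap.range_eq_bot.mp hr) hf0
      · exact LinearMap.range_eq_top.mp hr
    refine ⟨χ, LinearEquiv.ofBijective f ⟨hinj, hsurj⟩, fun g v => ?_⟩
    show f ((χ g : k) • σ₁ g v) = σ₂ g (f v)
    rw [map_smul, hkey g v, smul_smul]
    rw [show (χ g : k) * ((ν g)⁻¹ * d g) = 1 from by
      show (ν g / d g) * ((ν g)⁻¹ * d g) = 1
      field_simp
      rw [mul_comm (ν g) (d g), div_self (mul_ne_zero (hdne g) (hνne g))]]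
    rw [one_smul]
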